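/- arXiv:1511.01601 — 5 statements merged into one kernel-verified Lean document; each statement's English description precedes it below -/
import Mathlib

section
/- Let j ≥ 1 and 2^j ≤ m < 2^{j+1}. Then the largest integer i with 0 ≤ i ≤ m such that the binomial coefficient C(m+i, m) is odd equals 2^{j+1} − m − 1. -/
/-- If `a` and `b` have disjoint binary digits, then `a + b = a ||| b`. -/
lemma add_eq_or_of_and_eq_zero : ∀ a b : ℕ, a &&& b = 0 → a + b = a ||| b := by
  intro a
  induction a using Nat.strong_induction_on with
  | _ a ih =>
    intro b h
    rcases Nat.eq_zero_or_pos a with rfl | ha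
    · simp
    · have hdiv : a / 2 &&& b / 2 = 0 := by
        rw [← Nat.and_div_two, h]
      have ih2 : a / 2 + b / 2 = a / 2 ||| b / 2 :=
        ih (a / 2) (Nat.div_lt_self ha (by norm_num)) (b / 2) hdiv
      have hor : (a ||| b) / 2 = a / 2 ||| b / 2 := Nat.or_div_two
      have hmod : ¬ (a % 2 = 1 ∧ b % 2 = 1) := by
        intro hc
        have := Nat.and_mod_two_eq_one.mpr hc
        rw [h] at this
        simp at this
      have hormod : (a ||| b) % 2 = 1 ↔ a % 2 = 1 ∨ b % 2 = 1 := Nat.or_mod_two_eq_one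
      omega

/-- Kummer/Lucas for `p = 2`: `C(a+b, b)` is odd iff `a` and `b` have disjoint binary digits. -/
lemma odd_choose_iff_and_eq_zero : ∀ n a b : ℕ, a + b = n →
    (Odd (Nat.choose n b) ↔ a &&& b = 0) := by
  intro n
  induction n using Nat.strong_induction_on with
  | _ n ih =>
    intro a b hab
    rcases Nat.eq_zero_or_pos n with rfl | hn
    · have ha : a = 0 := by omega
      have hb : b = 0 := by omega
      subst ha hb
      simp
    · have key : Nat.choose n b ≡
          Nat.choose (n % 2) (b % 2) * Nat.choose (n / 2) (b / 2) [MOD 2] := by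
        have : Fact (Nat.Prime 2) := ⟨Nat.prime_two⟩
        exact Choose.choose_modEq_choose_mod_mul_choose_div_nat
      have hodd : Odd (Nat.choose n b) ↔
          Odd (Nat.choose (n % 2) (b % 2)) ∧ Odd (Nat.choose (n / 2) (b / 2)) := by
        have key' : Nat.choose n b % 2 =
            (Nat.choose (n % 2) (b % 2) * Nat.choose (n / 2) (b / 2)) % 2 := key
        rw [Nat.odd_iff, key', ← Nat.odd_iff, Nat.odd_mul]
      by_cases hc : a % 2 = 1 ∧ b % 2 = 1
      · -- both odd: carry, choose is even and `a &&& b ≠ 0`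
        have hn2 : n % 2 = 0 := by omega
        have hb2 : b % 2 = 1 := hc.2
        have hchoose : Nat.choose (n % 2) (b % 2) = 0 := by
          rw [hn2, hb2]; rfl
        have hand : (a &&& b) % 2 = 1 := Nat.and_mod_two_eq_one.mpr hc
        constructor
        · intro hO
          rw [hodd, hchoose] at hO
          exact absurd hO.1 (by simp)
        · intro h0
          rw [h0] at hand
          simp at hand
      · -- no carry at bit 0
        have hdiv : n / 2 = a / 2 + b / 2 := by omega
        have ih2 : Odd (Nat.choose (n / 2) (b / 2)) ↔ a / 2 &&& b / 2 = 0 :=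
          ih (n / 2) (Nat.div_lt_self hn (by norm_num)) (a / 2) (b / 2) hdiv.symm
        have hchoose : Nat.choose (n % 2) (b % 2) = 1 := by
          have hb2 : b % 2 ≤ n % 2 := by omega
          rcases Nat.mod_two_eq_zero_or_one n with hn2 | hn2 <;>
            rcases Nat.mod_two_eq_zero_or_one b with hb2' | hb2' <;>
            rw [hn2, hb2'] at hb2 ⊢ <;> first | rfl | omega
        have hand2 : (a &&& b) % 2 = 0 := by
          have := @Nat.and_mod_two_eq_one a b
          omega
        have handdiv : (a &&& b) / 2 = a / 2 &&& b / 2 := Nat.and_div_two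
        rw [hodd, hchoose, ih2]
        constructor
        · rintro ⟨-, h0⟩
          omega
        · intro h0
          refine ⟨odd_one, ?_⟩
          omega

/-- For `j ≥ 1` and `2^j ≤ m < 2^{j+1}`, the largest `i ≤ m` with `C(m+i, m)` odd is
`2^{j+1} - m - 1`. -/
theorem stmt_8 (j m : ℕ) (hj : 1 ≤ j) (h1 : 2 ^ j ≤ m) (h2 : m < 2 ^ (j + 1)) :
    IsGreatest {i : ℕ | i ≤ m ∧ Odd (Nat.choose (m + i) m)} (2 ^ (j + 1) - m - 1) := by
  have hpow : 2 ^ (j + 1) = 2 * 2 ^ j := by ring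
  set M := 2 ^ (j + 1) - 1 with hM
  set c := m ^^^ M with hc
  -- bits of m above j are zero
  have hmbit : ∀ t, j + 1 ≤ t → m.testBit t = false := by
    intro t ht
    exact Nat.testBit_lt_two_pow (lt_of_lt_of_le h2 (Nat.pow_le_pow_right (by norm_num) ht))
  have hMbit : ∀ t, M.testBit t = decide (t < j + 1) := fun t =>
    Nat.testBit_two_pow_sub_one (j + 1) t
  -- m and c are disjoint
  have hdisj : m &&& c = 0 := by
    apply Nat.eq_of_testBit_eq
    intro t
    rw [Nat.testBit_land, hc, Nat.testBit_xor, hMbit, Nat.zero_testBit]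
    by_cases ht : j + 1 ≤ t
    · rw [hmbit t ht]; simp
    · cases hmt : m.testBit t <;> simp [ht] <;> omega
  -- m ||| c = M
  have hor : m ||| c = M := by
    apply Nat.eq_of_testBit_eq
    intro t
    rw [Nat.testBit_lor, hc, Nat.testBit_xor, hMbit]
    by_cases ht : j + 1 ≤ t
    · rw [hmbit t ht]; simp
    · cases hmt : m.testBit t <;> simp [ht] <;> omega
  have hsum : m + c = M := by
    rw [add_eq_or_of_and_eq_zero m c hdisj, hor]
  have hcval : c = 2 ^ (j + 1) - m - 1 := by omega
  constructor
  · -- membership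
    constructor
    · omega
    · rw [← hcval]
      have : c &&& m = 0 := by rwa [Nat.land_comm]
      exact (odd_choose_iff_and_eq_zero (m + c) c m (by omega)).mpr this
  · -- upper bound
    rintro i ⟨hile, hiodd⟩
    have hand : i &&& m = 0 :=
      (odd_choose_iff_and_eq_zero (m + i) i m (by omega)).mp hiodd
    have hsum2 : i + m = i ||| m := add_eq_or_of_and_eq_zero i m hand
    have hlt : i ||| m < 2 ^ (j + 1) :=
      Nat.or_lt_two_pow (lt_of_le_of_lt hile h2) h2
    omega
end

section
/- Let j ≥ 1 and 2^j ≤ m < 2^{j+1}. For every integer i with 2^{j+1} − m − 1 < i ≤ m, the binomial coefficient C(m+i, m) is even. -/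
/-- For `j ≥ 1`, `2^j ≤ m < 2^{j+1}` and `2^{j+1} - m - 1 < i ≤ m`, the binomial
coefficient `C(m+i, m)` is even. -/
theorem stmt_10 (j m : ℕ) (hj : 1 ≤ j) (h1 : 2 ^ j ≤ m) (h2 : m < 2 ^ (j + 1)) :
    ∀ i : ℕ, 2 ^ (j + 1) - m - 1 < i → i ≤ m → Even (Nat.choose (m + i) m) := by
  intro i hi1 hi2
  have hprime : Nat.Prime 2 := Nat.prime_two
  have him : i < 2 ^ (j + 1) := lt_of_le_of_lt hi2 h2
  have hsum : 2 ^ (j + 1) ≤ m + i := by omega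
  have hlog : Nat.log 2 (i + m) < j + 2 := by
    apply Nat.log_lt_of_lt_pow (by omega)
    have : (2:ℕ) ^ (j + 2) = 2 ^ (j+1) + 2 ^ (j+1) := by ring
    omega
  have hmult := Nat.Prime.emultiplicity_choose' hprime hlog
  rw [show i + m = m + i from add_comm i m] at hmult
  have hmem : (j + 1) ∈ Finset.filter
      (fun k => 2 ^ k ≤ m % 2 ^ k + i % 2 ^ k) (Finset.Ico 1 (j + 2)) := by
    simp only [Finset.mem_filter, Finset.mem_Ico]
    refine ⟨⟨by omega, by omega⟩, ?_⟩
    rw [Nat.mod_eq_of_lt h2, Nat.mod_eq_of_lt him]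
    exact hsum
  have hcard : 1 ≤ (Finset.filter
      (fun k => 2 ^ k ≤ m % 2 ^ k + i % 2 ^ k) (Finset.Ico 1 (j + 2))).card :=
    Finset.card_pos.mpr ⟨j + 1, hmem⟩
  have hdvd : (2:ℕ) ^ 1 ∣ Nat.choose (m + i) m := by
    apply pow_dvd_of_le_emultiplicity
    rw [hmult]
    exact_mod_cast hcard
  simpa [Nat.even_iff, Nat.dvd_iff_mod_eq_zero] using hdvd
end

section
/- In the truncated polynomial ring R = (ℤ/2)[α]/(α^{m+1}) with j ≥ 1 and 2^j ≤ m < 2^{j+1}, the element 1 + α is a unit, its inverse raised to the power m+1 equals 1 + Σ_{i=1}^{m} C(m+i, m) α^i (coefficients reduced mod 2), and the largest q with nonzero coefficient of α^q in (1+α)^{-(m+1)} is q = 2^{j+1} − m − 1. -/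
open Polynomial

open Finset in
/-- Lucas' theorem mod 2, in `ZMod 2`. -/
lemma lucas_two (n k : ℕ) :
    ((n.choose k : ZMod 2)) =
      ((n % 2).choose (k % 2) : ZMod 2) * ((n / 2).choose (k / 2) : ZMod 2) := by
  haveI : Fact (Nat.Prime 2) := ⟨Nat.prime_two⟩
  have h := (ZMod.intCast_eq_intCast_iff _ _ _).mpr
    (Choose.choose_modEq_choose_mod_mul_choose_div (n := n) (k := k) (p := 2))
  push_cast at h
  exact_mod_cast h

/-- `C(2^t - 1, k)` is odd for `k < 2^t`. -/
lemma choose_pow_sub_one_odd : ∀ t : ℕ, ∀ k : ℕ, k < 2 ^ t →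
    (((2 ^ t - 1).choose k : ZMod 2)) = 1 := by
  intro t
  induction t with
  | zero =>
    intro k hk
    interval_cases k
    simp
  | succ t ih =>
    intro k hk
    have h2t : 2 ^ (t + 1) = 2 * 2 ^ t := by ring
    have hpos : 0 < 2 ^ t := Nat.pow_pos (by norm_num)
    rw [lucas_two]
    have hmod : (2 ^ (t + 1) - 1) % 2 = 1 := by omega
    have hdiv : (2 ^ (t + 1) - 1) / 2 = 2 ^ t - 1 := by omega
    rw [hmod, hdiv, ih (k / 2) (by omega)]
    have : k % 2 = 0 ∨ k % 2 = 1 := by omega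
    rcases this with h | h <;> rw [h] <;> simp

/-- If `m, q < 2^t` but `2^t ≤ m + q`, then `C(m+q, m)` is even (Kummer). -/
lemma choose_add_even : ∀ t : ℕ, ∀ m q : ℕ, m < 2 ^ t → q < 2 ^ t → 2 ^ t ≤ m + q →
    (((m + q).choose m : ZMod 2)) = 0 := by
  intro t
  induction t with
  | zero =>
    intro m q hm hq h
    simp at hm hq
    omega
  | succ t ih =>
    intro m q hm hq h
    have h2t : 2 ^ (t + 1) = 2 * 2 ^ t := by ring
    rw [lucas_two]
    by_cases hc : (m + q) % 2 = 0 ∧ m % 2 = 1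
    · rw [hc.1, hc.2]
      simp
    · have key := ih (m / 2) ((m + q) / 2 - m / 2) (by omega) (by omega) (by omega)
      have heq : m / 2 + ((m + q) / 2 - m / 2) = (m + q) / 2 := by omega
      rw [heq] at key
      rw [key, mul_zero]

open Finset in
/-- Key identity: in a commutative ring with `2 = 0` and `a^(m+1) = 0`,
`(1+a)^(n+1) · ∑_{i≤m} C(n+i,i) a^i = 1`. -/
lemma aux_inv {A : Type*} [CommRing A] (h2 : (2 : A) = 0) (m : ℕ) {a : A}
    (ha : a ^ (m + 1) = 0) :
    ∀ n : ℕ, (1 + a) ^ (n + 1) * ∑ i ∈ range (m + 1), ((n + i).choose i : A) * a ^ i = 1 := by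
  intro n
  induction n with
  | zero =>
    have hsum : ∑ i ∈ range (m + 1), ((0 + i).choose i : A) * a ^ i
        = ∑ i ∈ range (m + 1), a ^ i := by
      refine sum_congr rfl fun i _ => ?_
      simp [Nat.zero_add, Nat.choose_self]
    rw [hsum, pow_one]
    have hg := geom_sum_mul a (m + 1)
    have hneg : (a - 1 : A) = 1 + a := by linear_combination -h2
    rw [hneg] at hg
    rw [mul_comm, hg, ha]
    linear_combination -h2
  | succ n ih =>
    have key : (1 + a) * ∑ i ∈ range (m + 1), ((n + 1 + i).choose i : A) * a ^ i
        = ∑ i ∈ range (m + 1), ((n + i).choose i : A) * a ^ i := by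
      have expand : (1 + a) * ∑ i ∈ range (m + 1), ((n + 1 + i).choose i : A) * a ^ i
          = (∑ i ∈ range (m + 1), ((n + 1 + i).choose i : A) * a ^ i)
            + ∑ i ∈ range (m + 1), ((n + 1 + i).choose i : A) * a ^ (i + 1) := by
        rw [add_mul, one_mul, Finset.mul_sum]
        congr 1
        exact sum_congr rfl fun i _ => by ring
      rw [expand]
      rw [sum_range_succ (f := fun i => ((n + 1 + i).choose i : A) * a ^ (i + 1))]
      rw [ha, mul_zero, add_zero]
      rw [sum_range_succ' (f := fun i => ((n + 1 + i).choose i : A) * a ^ i)]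
      rw [sum_range_succ' (f := fun i => ((n + i).choose i : A) * a ^ i)]
      simp only [Nat.add_zero, Nat.choose_zero_right, Nat.cast_one, pow_zero, mul_one]
      rw [add_right_comm, ← sum_add_distrib]
      congr 1
      refine sum_congr rfl fun i _ => ?_
      have hp : (n + 1 + (i + 1)).choose (i + 1)
          = (n + 1 + i).choose i + (n + (i + 1)).choose (i + 1) := by
        have h := Nat.choose_succ_succ (n + 1 + i) i
        have e1 : n + 1 + (i + 1) = n + 1 + i + 1 := by ring
        have e2 : n + (i + 1) = n + 1 + i := by ring
        rw [e1, e2]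
        exact h
      rw [hp]
      push_cast
      linear_combination (((n + 1 + i).choose i : A) * a ^ (i + 1)) * h2
    calc (1 + a) ^ (n + 1 + 1) * ∑ i ∈ range (m + 1), ((n + 1 + i).choose i : A) * a ^ i
        = (1 + a) ^ (n + 1) * ((1 + a) * ∑ i ∈ range (m + 1),
            ((n + 1 + i).choose i : A) * a ^ i) := by ring
      _ = 1 := by rw [key]; exact ih

/-- In `R = (ℤ/2)[α]/(α^{m+1})` with `2^j ≤ m < 2^{j+1}`, `1 + α` is a unit, the
`(m+1)`-st power of its inverse is `1 + Σ_{i=1}^m C(m+i,m) α^i`, and the largest `q`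
with nonzero coefficient of `α^q` in this expansion is `2^{j+1} - m - 1`. -/
theorem stmt_11 (j m : ℕ) (hj : 1 ≤ j) (h1 : 2 ^ j ≤ m) (h2 : m < 2 ^ (j + 1)) :
    let R := (ZMod 2)[X] ⧸ Ideal.span {(X : (ZMod 2)[X]) ^ (m + 1)}
    let α : R := Ideal.Quotient.mk (Ideal.span {(X : (ZMod 2)[X]) ^ (m + 1)}) X
    IsUnit (1 + α) ∧
    (Ring.inverse (1 + α)) ^ (m + 1)
      = 1 + ∑ i ∈ Finset.Icc 1 m, ((Nat.choose (m + i) m : R) * α ^ i) ∧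
    IsGreatest {q : ℕ | q ≤ m ∧ (Nat.choose (m + q) m : ZMod 2) ≠ 0}
      (2 ^ (j + 1) - m - 1) := by
  intro R α
  have hα : α ^ (m + 1) = 0 := by
    show (Ideal.Quotient.mk _ X) ^ (m + 1) = 0
    rw [← map_pow]
    exact Ideal.Quotient.eq_zero_iff_mem.mpr (Ideal.subset_span rfl)
  have h2R : (2 : R) = 0 := by
    have hz : ((2 : ℕ) : (ZMod 2)[X]) = 0 := by
      rw [Nat.cast_ofNat]
      exact_mod_cast CharP.cast_eq_zero (ZMod 2)[X] 2
    calc (2 : R) = ((2 : ℕ) : R) := by norm_cast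
      _ = Ideal.Quotient.mk _ ((2 : ℕ) : (ZMod 2)[X]) := (map_natCast _ 2).symm
      _ = 0 := by rw [hz, map_zero]
  have hmain := aux_inv h2R m hα
  have hu : IsUnit (1 + α) := by
    have h0 := hmain 0
    rw [pow_one] at h0
    exact IsUnit.of_mul_eq_one _ h0
  refine ⟨hu, ?_, ?_⟩
  · -- inverse power formula
    have hum : IsUnit ((1 + α) ^ (m + 1)) := hu.pow _
    rw [Ring.inverse_pow]
    have hinv : Ring.inverse ((1 + α) ^ (m + 1))
        = ∑ i ∈ Finset.range (m + 1), ((m + i).choose i : R) * α ^ i := by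
      have hc := Ring.inverse_mul_cancel _ hum
      calc Ring.inverse ((1 + α) ^ (m + 1))
          = Ring.inverse ((1 + α) ^ (m + 1)) * ((1 + α) ^ (m + 1)
              * ∑ i ∈ Finset.range (m + 1), ((m + i).choose i : R) * α ^ i) := by
            rw [hmain m, mul_one]
        _ = (Ring.inverse ((1 + α) ^ (m + 1)) * (1 + α) ^ (m + 1))
              * ∑ i ∈ Finset.range (m + 1), ((m + i).choose i : R) * α ^ i := by ring
        _ = ∑ i ∈ Finset.range (m + 1), ((m + i).choose i : R) * α ^ i := by
            rw [hc, one_mul]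
    rw [hinv]
    rw [Finset.range_eq_Ico, Finset.sum_eq_sum_Ico_succ_bot (Nat.succ_pos m)]
    simp only [Nat.add_zero, Nat.choose_zero_right, Nat.cast_one, pow_zero, mul_one]
    rw [Nat.succ_eq_add_one, Finset.Ico_add_one_right_eq_Icc]
    congr 1
    refine Finset.sum_congr rfl fun i hi => ?_
    have hsym : (m + i).choose i = (m + i).choose m := by
      have := Nat.choose_symm (n := m + i) (k := i) (Nat.le_add_left i m)
      have e : m + i - i = m := by omega
      rw [e] at this
      exact this.symm
    rw [hsym]
  · -- IsGreatest
    have hpow : 2 ^ (j + 1) = 2 * 2 ^ j := by ring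
    have hq0 : m + (2 ^ (j + 1) - m - 1) = 2 ^ (j + 1) - 1 := by omega
    constructor
    · refine ⟨by omega, ?_⟩
      rw [hq0]
      rw [choose_pow_sub_one_odd (j + 1) m (by omega)]
      exact one_ne_zero
    · rintro q ⟨hqm, hodd⟩
      by_contra hlt
      push_neg at hlt
      exact hodd (choose_add_even (j + 1) m q (by omega) (by omega) (by omega))
end

section
/- For k distinct points z₁, …, z_k ∈ ℂ, the k vectors v_i = (1, Re z_i, Im z_i, Re z_i², Im z_i², …, Re z_i^{k-1}, Im z_i^{k-1}) ∈ ℝ^{2k-1} are linearly dependent over ℝ only if the complex vectors (1, z_i, …, z_i^{k-1}) are linearly dependent over ℂ; consequently the map ℂ → ℝ^{2k-1}, z ↦ (1, Re z, Im z, …, Re z^{k-1}, Im z^{k-1}) is a (real) k-regular map. -/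
/-- For `k` distinct complex numbers, an `ℝ`-linear dependence of the real vectors
`(1, Re zᵢ, Im zᵢ, …, Re zᵢ^{k-1}, Im zᵢ^{k-1})` would force a `ℂ`-linear dependence
of the Vandermonde vectors `(1, zᵢ, …, zᵢ^{k-1})`; consequently the map
`z ↦ (1, Re z, Im z, …, Re z^{k-1}, Im z^{k-1})` into `ℝ^{2k-1}` is `k`-regular. -/
theorem stmt_18 (k : ℕ) (hk : 1 ≤ k) (z : Fin k → ℂ) (hz : Function.Injective z) :
    (¬ LinearIndependent ℝ (fun i : Fin k =>
        (((1 : ℝ), fun j : Fin (k - 1) =>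
          ((z i ^ ((j : ℕ) + 1)).re, (z i ^ ((j : ℕ) + 1)).im)) :
          ℝ × (Fin (k - 1) → ℝ × ℝ))) →
      ¬ LinearIndependent ℂ (fun i : Fin k => fun j : Fin k => z i ^ (j : ℕ))) ∧
    LinearIndependent ℝ (fun i : Fin k =>
      (((1 : ℝ), fun j : Fin (k - 1) =>
        ((z i ^ ((j : ℕ) + 1)).re, (z i ^ ((j : ℕ) + 1)).im)) :
        ℝ × (Fin (k - 1) → ℝ × ℝ))) := by
  have hli : LinearIndependent ℝ (fun i : Fin k =>
      (((1 : ℝ), fun j : Fin (k - 1) =>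
        ((z i ^ ((j : ℕ) + 1)).re, (z i ^ ((j : ℕ) + 1)).im)) :
        ℝ × (Fin (k - 1) → ℝ × ℝ))) := by
    rw [Fintype.linearIndependent_iff]
    intro g hg
    -- extract componentwise equations
    have h1 : ∑ i, g i = 0 := by
      have := congrArg Prod.fst hg
      simpa [Finset.sum_apply, Prod.fst_sum] using this
    have h2 : ∀ j : Fin (k - 1),
        (∑ i, g i * (z i ^ ((j : ℕ) + 1)).re) = 0 ∧
        (∑ i, g i * (z i ^ ((j : ℕ) + 1)).im) = 0 := by
      intro j
      have hsnd := congrArg Prod.snd hg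
      have hj := congrFun hsnd j
      constructor
      · have := congrArg Prod.fst hj
        simpa [Finset.sum_apply, Prod.fst_sum, Prod.snd_sum] using this
      · have := congrArg Prod.snd hj
        simpa [Finset.sum_apply, Prod.fst_sum, Prod.snd_sum] using this
    -- complex relation for all powers 0..k-1
    have hc : ∀ m : Fin k, (∑ i, ((g i : ℂ)) * z i ^ (m : ℕ)) = 0 := by
      intro m
      rcases Nat.eq_zero_or_pos (m : ℕ) with hm | hm
      · rw [hm]
        simp only [pow_zero, mul_one]
        rw [← Complex.ofReal_sum, h1, Complex.ofReal_zero]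
      · obtain ⟨n, hn⟩ := Nat.exists_eq_succ_of_ne_zero (Nat.pos_iff_ne_zero.mp hm)
        have hnlt : n < k - 1 := by omega
        have := h2 ⟨n, hnlt⟩
        apply Complex.ext
        · rw [Complex.re_sum]
          simpa [hn, Complex.mul_re] using this.1
        · rw [Complex.im_sum]
          simpa [hn, Complex.mul_im] using this.2
    have := Matrix.eq_zero_of_forall_pow_sum_mul_pow_eq_zero hz hc
    intro i
    have hi := congrFun this i
    simpa using hi
  exact ⟨fun h => absurd hli h, hli⟩
end

section
/- In the ring (ℤ/2)[β]/(β^{m+1}) where j ≥ 1 and 2^j ≤ m < 2^{j+1}, the inverse of (1+β)^{m+1} equals 1 + Σ_{i=1}^{m} C(m+i, m) β^i (coefficients mod 2), and the largest q such that the coefficient of β^q in this inverse is nonzero is q = 2^{j+1} − m − 1; interpreting β as a degree-2 class, the top nonzero dual Stiefel–Whitney class of ℂP^m sits in degree 2^{j+2} − 2m − 2. -/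
open Polynomial

private lemma lemA : ∀ n k : ℕ, k < 2 ^ n → Nat.choose (2 ^ n - 1) k % 2 = 1 := by
  intro n
  induction n with
  | zero =>
    intro k hk
    have : k = 0 := by simpa using Nat.lt_one_iff.mp (by simpa using hk)
    subst this; rfl
  | succ n ih =>
    intro k hk
    have hp : (2:ℕ) ^ (n+1) = 2 * 2 ^ n := by ring
    have hpos : (1:ℕ) ≤ 2 ^ n := Nat.one_le_two_pow
    have h : Nat.choose (2 ^ (n+1) - 1) k % 2 =
        (Nat.choose ((2 ^ (n+1) - 1) % 2) (k % 2) *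
          Nat.choose ((2 ^ (n+1) - 1) / 2) (k / 2)) % 2 :=
      Choose.choose_modEq_choose_mod_mul_choose_div_nat (p := 2)
    have h1 : (2 ^ (n+1) - 1) % 2 = 1 := by omega
    have h2 : (2 ^ (n+1) - 1) / 2 = 2 ^ n - 1 := by omega
    rw [h1, h2] at h
    have hc1 : Nat.choose 1 (k % 2) = 1 := by
      have : k % 2 = 0 ∨ k % 2 = 1 := by omega
      rcases this with h' | h' <;> rw [h'] <;> rfl
    have hk2 : k / 2 < 2 ^ n := by omega
    have := ih (k / 2) hk2
    rw [hc1, one_mul] at h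
    omega

private lemma lemB : ∀ a m q : ℕ, m < 2 ^ a → q < 2 ^ a → 2 ^ a ≤ m + q →
    Nat.choose (m + q) m % 2 = 0 := by
  intro a
  induction a with
  | zero => intro m q hm hq hs; omega
  | succ a ih =>
    intro m q hm hq hs
    have hp : (2:ℕ) ^ (a+1) = 2 * 2 ^ a := by ring
    have hpos : (1:ℕ) ≤ 2 ^ a := Nat.one_le_two_pow
    have h : Nat.choose (m + q) m % 2 =
        (Nat.choose ((m + q) % 2) (m % 2) * Nat.choose ((m + q) / 2) (m / 2)) % 2 :=
      Choose.choose_modEq_choose_mod_mul_choose_div_nat (p := 2)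
    rcases Nat.mod_two_eq_zero_or_one m with hm2 | hm2 <;>
      rcases Nat.mod_two_eq_zero_or_one q with hq2 | hq2
    · have h01 : (m + q) % 2 = 0 := by omega
      have hdiv : (m + q) / 2 = m / 2 + q / 2 := by omega
      have hib := ih (m / 2) (q / 2) (by omega) (by omega) (by omega)
      rw [h01, hm2, hdiv] at h
      have : Nat.choose 0 0 = 1 := rfl
      rw [this, one_mul] at h
      omega
    · have h01 : (m + q) % 2 = 1 := by omega
      have hdiv : (m + q) / 2 = m / 2 + q / 2 := by omega
      have hib := ih (m / 2) (q / 2) (by omega) (by omega) (by omega)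
      rw [h01, hm2, hdiv] at h
      have : Nat.choose 1 0 = 1 := rfl
      rw [this, one_mul] at h
      omega
    · have h01 : (m + q) % 2 = 1 := by omega
      have hdiv : (m + q) / 2 = m / 2 + q / 2 := by omega
      have hib := ih (m / 2) (q / 2) (by omega) (by omega) (by omega)
      rw [h01, hm2, hdiv] at h
      have : Nat.choose 1 1 = 1 := rfl
      rw [this, one_mul] at h
      omega
    · have h01 : (m + q) % 2 = 0 := by omega
      rw [h01, hm2] at h
      have : Nat.choose 0 1 = 0 := rfl
      rw [this, zero_mul] at h
      omega

private lemma key (m : ℕ) :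
    ((1 + X : (ZMod 2)[X]) ^ (m + 1) *
      ∑ i ∈ Finset.range (m + 1), Polynomial.C ((Nat.choose (m + i) m : ZMod 2)) * X ^ i - 1)
      ∈ Ideal.span {(X : (ZMod 2)[X]) ^ (m + 1)} := by
  rw [Ideal.mem_span_singleton]
  rw [Polynomial.X_pow_dvd_iff]
  intro d hd
  have hps : (1 - PowerSeries.X : PowerSeries (ZMod 2)) ^ (m + 1) *
      PowerSeries.mk (fun n => (Nat.choose (m + n) m : ZMod 2)) = 1 := by
    rw [mul_comm]
    exact PowerSeries.mk_add_choose_mul_one_sub_pow_eq_one (ZMod 2) m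
  have hco : (1 - PowerSeries.X : PowerSeries (ZMod 2)) ^ (m + 1) =
      (((1 + X : (ZMod 2)[X]) ^ (m + 1) : (ZMod 2)[X]) : PowerSeries (ZMod 2)) := by
    have hneg : (1 - PowerSeries.X : PowerSeries (ZMod 2)) = 1 + PowerSeries.X := by
      have hz : ∀ a : ZMod 2, -a = a := by decide
      ext n
      rw [map_sub, map_add, sub_eq_add_neg, hz]
    rw [hneg, Polynomial.coe_pow, Polynomial.coe_add, Polynomial.coe_one, Polynomial.coe_X]
  have hP : ∀ i : ℕ, i ≤ m →
      (∑ j ∈ Finset.range (m + 1), Polynomial.C ((Nat.choose (m + j) m : ZMod 2)) * X ^ j).coeff i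
        = (Nat.choose (m + i) m : ZMod 2) := by
    intro i hi
    rw [Polynomial.finset_sum_coeff]
    simp only [Polynomial.coeff_C_mul, Polynomial.coeff_X_pow]
    rw [Finset.sum_eq_single i]
    · simp
    · intro b _ hb; simp [Ne.symm hb]
    · intro hni; exact absurd (Finset.mem_range.mpr (by omega)) hni
  have hcoeff := congrArg (PowerSeries.coeff (R := ZMod 2) d) hps
  rw [PowerSeries.coeff_mul, hco] at hcoeff
  rw [Polynomial.coeff_sub, Polynomial.coeff_mul]
  have hterm : ∀ p ∈ Finset.HasAntidiagonal.antidiagonal d,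
      ((1 + X : (ZMod 2)[X]) ^ (m + 1)).coeff p.1 *
        (∑ j ∈ Finset.range (m + 1),
          Polynomial.C ((Nat.choose (m + j) m : ZMod 2)) * X ^ j).coeff p.2
      = (PowerSeries.coeff (R := ZMod 2) p.1)
          (((1 + X : (ZMod 2)[X]) ^ (m + 1) : (ZMod 2)[X]) : PowerSeries (ZMod 2)) *
        (PowerSeries.coeff (R := ZMod 2) p.2)
          (PowerSeries.mk fun n => (Nat.choose (m + n) m : ZMod 2)) := by
    intro p hp
    rw [Finset.HasAntidiagonal.mem_antidiagonal] at hp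
    rw [Polynomial.coeff_coe, PowerSeries.coeff_mk, hP p.2 (by omega)]
  have hsum2 := Finset.sum_congr rfl hterm
  rw [hsum2, hcoeff]
  simp [PowerSeries.coeff_one, Polynomial.coeff_one]

/-- In `(ℤ/2)[β]/(β^{m+1})` with `2^j ≤ m < 2^{j+1}`, the inverse of `(1+β)^{m+1}`
equals `1 + Σ_{i=1}^m C(m+i,m) β^i`, the largest `q` with nonzero coefficient of `β^q`
is `2^{j+1} - m - 1`, and (with `β` of degree 2) the top nonzero dual Stiefel–Whitney
class of `ℂP^m` sits in degree `2^{j+2} - 2m - 2`. -/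
theorem stmt_19 (j m : ℕ) (hj : 1 ≤ j) (h1 : 2 ^ j ≤ m) (h2 : m < 2 ^ (j + 1)) :
    let R := (ZMod 2)[X] ⧸ Ideal.span {(X : (ZMod 2)[X]) ^ (m + 1)}
    let β : R := Ideal.Quotient.mk (Ideal.span {(X : (ZMod 2)[X]) ^ (m + 1)}) X
    IsUnit ((1 + β) ^ (m + 1)) ∧
    Ring.inverse ((1 + β) ^ (m + 1))
      = 1 + ∑ i ∈ Finset.Icc 1 m, ((Nat.choose (m + i) m : R) * β ^ i) ∧
    IsGreatest {q : ℕ | q ≤ m ∧ (Nat.choose (m + q) m : ZMod 2) ≠ 0}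
      (2 ^ (j + 1) - m - 1) ∧
    2 * (2 ^ (j + 1) - m - 1) = 2 ^ (j + 2) - 2 * m - 2 := by
  intro R β
  have hp1 : (2:ℕ) ^ (j+1) = 2 * 2 ^ j := by ring
  have hp2 : (2:ℕ) ^ (j+2) = 4 * 2 ^ j := by ring
  set I : Ideal (ZMod 2)[X] := Ideal.span {(X : (ZMod 2)[X]) ^ (m + 1)} with hI
  have hβm : β ^ (m + 1) = 0 := by
    show (Ideal.Quotient.mk I X) ^ (m + 1) = 0
    rw [← map_pow, Ideal.Quotient.eq_zero_iff_mem]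
    exact Ideal.subset_span rfl
  have hnil : IsNilpotent β := ⟨m + 1, hβm⟩
  have hu : IsUnit ((1 + β) ^ (m + 1)) := (hnil.isUnit_one_add).pow _
  have hterm : ∀ i : ℕ,
      Ideal.Quotient.mk I (Polynomial.C ((Nat.choose (m + i) m : ZMod 2)) * X ^ i)
        = ((Nat.choose (m + i) m : R)) * β ^ i := by
    intro i
    simp only [map_mul, map_pow, map_natCast]
    rfl
  have hsum : Ideal.Quotient.mk I
        (∑ i ∈ Finset.range (m + 1), Polynomial.C ((Nat.choose (m + i) m : ZMod 2)) * X ^ i)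
      = (1 : R) + ∑ i ∈ Finset.Icc 1 m, ((Nat.choose (m + i) m : R) * β ^ i) := by
    have hins : Finset.range (m + 1) = insert 0 (Finset.Icc 1 m) := by
      ext x; simp only [Finset.mem_range, Finset.mem_insert, Finset.mem_Icc]; omega
    rw [map_sum]
    simp only [hterm]
    rw [hins, Finset.sum_insert (by simp)]
    congr 1
    simp
  have hmul : (1 + β) ^ (m + 1) *
      ((1 : R) + ∑ i ∈ Finset.Icc 1 m, ((Nat.choose (m + i) m : R) * β ^ i)) = 1 := by
    rw [← hsum]
    have h1β : (1 + β) ^ (m + 1) = Ideal.Quotient.mk I ((1 + X) ^ (m + 1)) := by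
      rw [map_pow, map_add, map_one]
    rw [h1β, ← map_mul, ← map_one (Ideal.Quotient.mk I)]
    rw [Ideal.Quotient.eq]
    exact key m
  refine ⟨hu, ?_, ?_, by omega⟩
  · have hc := Ring.inverse_mul_cancel _ hu
    calc Ring.inverse ((1 + β) ^ (m + 1))
        = Ring.inverse ((1 + β) ^ (m + 1)) * ((1 + β) ^ (m + 1) *
          ((1 : R) + ∑ i ∈ Finset.Icc 1 m, ((Nat.choose (m + i) m : R) * β ^ i))) := by
          rw [hmul, mul_one]
      _ = _ := by rw [← mul_assoc, hc, one_mul]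
  · constructor
    · refine ⟨by omega, ?_⟩
      have heq : m + (2 ^ (j+1) - m - 1) = 2 ^ (j+1) - 1 := by omega
      rw [heq]
      have := lemA (j+1) m h2
      intro hzero
      rw [ZMod.natCast_eq_zero_iff] at hzero
      omega
    · rintro q ⟨hq1, hq2⟩
      by_contra hlt
      push_neg at hlt
      have := lemB (j+1) m q h2 (by omega) (by omega)
      apply hq2
      rw [ZMod.natCast_eq_zero_iff]
      omega
end
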